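/- Let p, q, r be pairwise distinct sentential variables. Then C(p,q) ⊨_Δ C(p∧r, q) ∨ C(p∧¬r, q). -/

import Mathlib

/-- Formulas of the preference language L, generated from sentential
variables by negation, conjunction, and the binary connective ⪰. -/
inductive Fml (α : Type) : Type where
  | var : α → Fml α
  | neg : Fml α → Fml α
  | conj : Fml α → Fml α → Fml α
  | succeq : Fml α → Fml α → Fml α

namespace Fml

variable {α : Type}

/-- φ∨ψ := ¬(¬φ∧¬ψ) -/
def disj (φ ψ : Fml α) : Fml α := neg (conj (neg φ) (neg ψ))
/-- φ→ψ := ¬φ∨ψ -/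
def impl (φ ψ : Fml α) : Fml α := disj (neg φ) ψ
/-- φ↔ψ := (φ→ψ)∧(ψ→φ) -/
def iffF (φ ψ : Fml α) : Fml α := conj (impl φ ψ) (impl ψ φ)
/-- φ≻ψ := (φ⪰ψ)∧¬(ψ⪰φ) -/
def succ (φ ψ : Fml α) : Fml α := conj (succeq φ ψ) (neg (succeq ψ φ))
/-- ⊤ := p→p for a fixed variable p -/
def topF (p : α) : Fml α := impl (var p) (var p)
/-- ⊥ := ¬⊤ -/
def botF (p : α) : Fml α := neg (topF p)
/-- ◻φ := ¬(¬φ⪰¬φ) -/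
def box (φ : Fml α) : Fml α := neg (succeq (neg φ) (neg φ))
/-- ◇φ := φ⪰φ -/
def dia (φ : Fml α) : Fml α := succeq φ φ
/-- Conditional obligation C(φ,ψ) := (φ∧ψ) ≻ (φ∧¬ψ) -/
def Cond (φ ψ : Fml α) : Fml α := succ (conj φ ψ) (conj φ (neg ψ))
/-- Obligation Oψ := C(⊤,ψ), where ⊤ uses the fixed variable p -/
def Ob (p : α) (ψ : Fml α) : Fml α := Cond (topF p) ψ
/-- Permission Pψ := ¬O¬ψ -/
def Perm (p : α) (ψ : Fml α) : Fml α := neg (Ob p (neg ψ))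

end Fml

/-- A model (W,S,U,T): a nonempty set of worlds, a selection function
picking a member of each nonempty set of worlds, a real-valued utility
function, and a truth-assignment. -/
structure Model (α : Type) : Type 1 where
  W : Type
  nonempty : Nonempty W
  S : W → Set W → W
  S_mem : ∀ (w : W) (A : Set W), A.Nonempty → S w A ∈ A
  U : W → ℝ
  T : α → Set W

open Classical in
/-- The proposition ⟦φ⟧_M expressed by φ in the model M. -/
noncomputable def sat {α : Type} (M : Model α) : Fml α → Set M.W
  | .var p => M.T p
  | .neg θ => (sat M θ)ᶜ
  | .conj θ ψ => sat M θ ∩ sat M ψ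
  | .succeq θ ψ =>
      if sat M θ = ∅ ∨ sat M ψ = ∅ then ∅
      else {w | M.U (M.S w (sat M θ)) ≥ M.U (M.S w (sat M ψ))}

/-- φ ⊨ ψ : in every model, ⟦φ⟧ ⊆ ⟦ψ⟧. -/
def Implies {α : Type} (φ ψ : Fml α) : Prop :=
  ∀ M : Model α, sat M φ ⊆ sat M ψ

/-- ⊨ φ : in every model, ⟦φ⟧ = W. -/
def Valid {α : Type} (φ : Fml α) : Prop :=
  ∀ M : Model α, sat M φ = Set.univ

/-- S is a selection function on W = 𝒫(Props): for each world w and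
nonempty set A of worlds, S w A ∈ A. -/
def IsSelection {α : Type} (S : Set α → Set (Set α) → Set α) : Prop :=
  ∀ (w : Set α) (A : Set (Set α)), A.Nonempty → S w A ∈ A

/-- S is Δ-based: no w₁ ∈ A has w Δ w₁ properly included in w Δ S(w,A). -/
def DeltaBased {α : Type} (S : Set α → Set (Set α) → Set α) : Prop :=
  ∀ (w : Set α) (A : Set (Set α)), A.Nonempty →
    ¬ ∃ w1 ∈ A, symmDiff w w1 ⊂ symmDiff w (S w A)

/-- A Δ model: W = 𝒫(Props), T(p) = {w | p ∈ w}, and a Δ-based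
selection function. -/
structure DeltaModel (α : Type) : Type where
  S : Set α → Set (Set α) → Set α
  S_mem : ∀ (w : Set α) (A : Set (Set α)), A.Nonempty → S w A ∈ A
  delta : DeltaBased S
  U : Set α → ℝ

/-- The underlying model of a Δ model. -/
def DeltaModel.toModel {α : Type} (M : DeltaModel α) : Model α where
  W := Set α
  nonempty := ⟨∅⟩
  S := M.S
  S_mem := M.S_mem
  U := M.U
  T := fun p => {w : Set α | p ∈ w}

/-- φ ⊨_Δ ψ : in every Δ model, ⟦φ⟧ ⊆ ⟦ψ⟧. -/
def DeltaImplies {α : Type} (φ ψ : Fml α) : Prop :=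
  ∀ M : DeltaModel α, sat M.toModel φ ⊆ sat M.toModel ψ

/-- The g-distance between two worlds: the (possibly infinite) sum of the
weights of the variables in their symmetric difference. -/
noncomputable def gdist {α : Type} (g : α → ℝ) (w0 w1 : Set α) : ENNReal :=
  ∑' v : ↥(symmDiff w0 w1), ENNReal.ofReal (g v)

/-- S is g-based: no w' ∈ A is strictly g-closer to w than S(w,A). -/
def GBased {α : Type} (g : α → ℝ) (S : Set α → Set (Set α) → Set α) : Prop :=
  ∀ (w : Set α) (A : Set (Set α)), A.Nonempty →
    ¬ ∃ w' ∈ A, gdist g w w' < gdist g w (S w A)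


open Fml in
lemma sel_lit {α : Type} (M : DeltaModel α) (w : Set α) (A : Set (Set α))
    (P N : Set α) (hPN : ∀ x ∈ P, x ∉ N)
    (hA : ∀ t, t ∈ A ↔ (P ⊆ t ∧ ∀ x ∈ N, x ∉ t)) :
    M.S w A = (w ∪ P) \ N := by
  set m := (w ∪ P) \ N with hm
  have hmA : m ∈ A := (hA m).2 ⟨fun x hx => ⟨Or.inr hx, hPN x hx⟩,
    fun x hx hxm => hxm.2 hx⟩
  have hne : A.Nonempty := ⟨m, hmA⟩
  have hS := M.S_mem w A hne
  have hmin : ∀ t ∈ A, symmDiff w m ⊆ symmDiff w t := by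
    intro t ht x hx
    rcases Set.mem_symmDiff.1 hx with ⟨hxw, hxm⟩ | ⟨hxm, hxw⟩
    · have hxN : x ∈ N := by
        by_contra h; exact hxm ⟨Or.inl hxw, h⟩
      exact Set.mem_symmDiff.2 (Or.inl ⟨hxw, ((hA t).1 ht).2 x hxN⟩)
    · have hxP : x ∈ P := hxm.1.resolve_left hxw
      exact Set.mem_symmDiff.2 (Or.inr ⟨((hA t).1 ht).1 hxP, hxw⟩)
  by_contra hne'
  refine M.delta w A hne ⟨m, hmA, hmin _ hS, fun hc => ?_⟩
  exact hne' (symmDiff_right_injective w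
    (Set.Subset.antisymm (hmin _ hS) hc).symm)

lemma sat_succeq_eq {α : Type} (M : Model α) (θ ψ : Fml α)
    (hθ : (sat M θ).Nonempty) (hψ : (sat M ψ).Nonempty) :
    sat M (.succeq θ ψ) =
      {w | M.U (M.S w (sat M θ)) ≥ M.U (M.S w (sat M ψ))} := by
  rw [sat, if_neg]
  push_neg
  exact ⟨hθ, hψ⟩

open Fml in
theorem stmt_15 {α : Type} (p q r : α) (hpq : p ≠ q) (hpr : p ≠ r) (hqr : q ≠ r) :
    DeltaImplies (Cond (var p) (var q))
      (disj (Cond (conj (var p) (var r)) (var q))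
            (Cond (conj (var p) (neg (var r))) (var q))) := by
  intro M w hw
  obtain ⟨w, rfl⟩ : ∃ v : Set α, v = w := ⟨w, rfl⟩
  -- the six propositions
  have hApq : sat M.toModel (conj (var p) (var q)) = {t : Set α | p ∈ t ∧ q ∈ t} := rfl
  have hBpq : sat M.toModel (conj (var p) (neg (var q))) = {t : Set α | p ∈ t ∧ q ∉ t} := rfl
  have hA1 : sat M.toModel (conj (conj (var p) (var r)) (var q))
      = {t : Set α | (p ∈ t ∧ r ∈ t) ∧ q ∈ t} := rfl
  have hB1 : sat M.toModel (conj (conj (var p) (var r)) (neg (var q)))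
      = {t : Set α | (p ∈ t ∧ r ∈ t) ∧ q ∉ t} := rfl
  have hA2 : sat M.toModel (conj (conj (var p) (neg (var r))) (var q))
      = {t : Set α | (p ∈ t ∧ r ∉ t) ∧ q ∈ t} := rfl
  have hB2 : sat M.toModel (conj (conj (var p) (neg (var r))) (neg (var q)))
      = {t : Set α | (p ∈ t ∧ r ∉ t) ∧ q ∉ t} := rfl
  -- nonemptiness
  have nA : ({t : Set α | p ∈ t ∧ q ∈ t}).Nonempty :=
    ⟨{p, q}, by simp⟩
  have nB : ({t : Set α | p ∈ t ∧ q ∉ t}).Nonempty :=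
    ⟨{p}, by simp [Ne.symm hpq]⟩
  have nA1 : ({t : Set α | (p ∈ t ∧ r ∈ t) ∧ q ∈ t}).Nonempty :=
    ⟨{p, r, q}, by simp⟩
  have nB1 : ({t : Set α | (p ∈ t ∧ r ∈ t) ∧ q ∉ t}).Nonempty :=
    ⟨{p, r}, by simp [Ne.symm hpq, hqr]⟩
  have nA2 : ({t : Set α | (p ∈ t ∧ r ∉ t) ∧ q ∈ t}).Nonempty :=
    ⟨{p, q}, by simp [Ne.symm hpr, Ne.symm hqr]⟩
  have nB2 : ({t : Set α | (p ∈ t ∧ r ∉ t) ∧ q ∉ t}).Nonempty :=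
    ⟨{p}, by simp [Ne.symm hpq, Ne.symm hpr]⟩
  -- selections
  have sA : M.toModel.S w {t : Set α | p ∈ t ∧ q ∈ t} = (w ∪ {p, q}) \ (∅ : Set α) := by
    show M.S w _ = _
    apply sel_lit <;> (try (intro t; show (_ ∧ _) ↔ _)) <;> (try simp [Set.subset_def, and_comm]) <;> tauto
  have sB : M.toModel.S w {t : Set α | p ∈ t ∧ q ∉ t} = (w ∪ {p}) \ ({q} : Set α) := by
    show M.S w _ = _
    apply sel_lit
    · simp [hpq]
    · intro t; show (_ ∧ _) ↔ _; simp [Set.subset_def]; try tauto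
  have sA1 : M.toModel.S w {t : Set α | (p ∈ t ∧ r ∈ t) ∧ q ∈ t}
      = (w ∪ {p, r, q}) \ (∅ : Set α) := by
    show M.S w _ = _
    apply sel_lit
    · simp
    · intro t; show (_ ∧ _) ↔ _; simp [Set.subset_def]; try tauto
  have sB1 : M.toModel.S w {t : Set α | (p ∈ t ∧ r ∈ t) ∧ q ∉ t}
      = (w ∪ {p, r}) \ ({q} : Set α) := by
    show M.S w _ = _
    apply sel_lit
    · simp [hpq, Ne.symm hqr]
    · intro t; show (_ ∧ _) ↔ _; simp [Set.subset_def]; try tauto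
  have sA2 : M.toModel.S w {t : Set α | (p ∈ t ∧ r ∉ t) ∧ q ∈ t}
      = (w ∪ {p, q}) \ ({r} : Set α) := by
    show M.S w _ = _
    apply sel_lit
    · simp [hpr, hqr]
    · intro t; show (_ ∧ _) ↔ _; simp [Set.subset_def]; try tauto
  have sB2 : M.toModel.S w {t : Set α | (p ∈ t ∧ r ∉ t) ∧ q ∉ t}
      = (w ∪ {p}) \ ({q, r} : Set α) := by
    show M.S w _ = _
    apply sel_lit
    · simp [hpq, hpr]
    · intro t; show (_ ∧ _) ↔ _; simp [Set.subset_def]; try tauto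
  -- extract hypothesis
  rw [show (Cond (var p) (var q)) = conj (succeq (conj (var p) (var q)) (conj (var p) (neg (var q)))) (neg (succeq (conj (var p) (neg (var q))) (conj (var p) (var q)))) from rfl] at hw
  rw [sat] at hw
  rw [sat_succeq_eq M.toModel _ _ (hApq ▸ nA) (hBpq ▸ nB)] at hw
  obtain ⟨hw1, hw2⟩ := hw
  rw [sat, sat_succeq_eq M.toModel _ _ (hBpq ▸ nB) (hApq ▸ nA)] at hw2
  simp only [Set.mem_compl_iff, Set.mem_setOf_eq, not_le, ge_iff_le] at hw1 hw2
  change M.toModel.U _ ≤ M.toModel.U _ at hw1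
  change ¬ (M.toModel.U _ ≤ M.toModel.U _) at hw2
  rw [not_le] at hw2
  -- hw2 : strict inequality  U(S w B) < U(S w A)
  have hstrict : M.U ((w ∪ {p}) \ ({q} : Set α)) < M.U ((w ∪ {p, q}) \ (∅ : Set α)) := by
    rw [← sA, ← sB]; exact hw2
  -- goal
  rw [show (disj (Cond (conj (var p) (var r)) (var q))
      (Cond (conj (var p) (neg (var r))) (var q)))
    = neg (conj (neg (Cond (conj (var p) (var r)) (var q)))
        (neg (Cond (conj (var p) (neg (var r))) (var q)))) from rfl]
  rw [sat, sat, sat, sat]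
  rw [← Set.compl_union, compl_compl]
  show w ∈ _ ∨ w ∈ _
  by_cases hr : r ∈ w
  · left
    rw [show (Cond (conj (var p) (var r)) (var q)) = conj (succeq (conj (conj (var p) (var r)) (var q)) (conj (conj (var p) (var r)) (neg (var q)))) (neg (succeq (conj (conj (var p) (var r)) (neg (var q))) (conj (conj (var p) (var r)) (var q)))) from rfl]
    rw [sat, sat_succeq_eq M.toModel _ _ (hA1 ▸ nA1) (hB1 ▸ nB1)]
    have e1 : (w ∪ {p, r, q}) \ (∅ : Set α) = (w ∪ {p, q}) \ (∅ : Set α) := by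
      ext x
      by_cases hx : x = r
      · subst hx; simp [hr]
      · simp [hx]
    have e2 : (w ∪ {p, r}) \ ({q} : Set α) = (w ∪ {p}) \ ({q} : Set α) := by
      ext x
      simp only [Set.mem_diff, Set.mem_union, Set.mem_insert_iff, Set.mem_singleton_iff]
      constructor
      · rintro ⟨h1 | h2 | h3, h4⟩ <;> simp_all
      · rintro ⟨h1 | h2, h4⟩ <;> simp_all
    constructor
    · show M.toModel.U (M.toModel.S w _) ≥ M.toModel.U (M.toModel.S w _)
      have h := le_of_lt hstrict
      rw [← e1, ← e2, ← sA1, ← sB1] at h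
      exact h
    · rw [sat, sat_succeq_eq M.toModel _ _ (hB1 ▸ nB1) (hA1 ▸ nA1)]
      show ¬ (M.toModel.U (M.toModel.S w _) ≥ M.toModel.U (M.toModel.S w _))
      have h := hstrict
      rw [← e1, ← e2, ← sA1, ← sB1] at h
      exact not_le.2 h
  · right
    try simp only [Set.not_mem_compl_iff]
    try rw [show (Cond (conj (var p) (neg (var r))) (var q)) = conj (succeq (conj (conj (var p) (neg (var r))) (var q)) (conj (conj (var p) (neg (var r))) (neg (var q)))) (neg (succeq (conj (conj (var p) (neg (var r))) (neg (var q))) (conj (conj (var p) (neg (var r))) (var q)))) from rfl]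
    rw [sat, sat_succeq_eq M.toModel _ _ (hA2 ▸ nA2) (hB2 ▸ nB2)]
    have e1 : (w ∪ {p, q}) \ ({r} : Set α) = (w ∪ {p, q}) \ (∅ : Set α) := by
      ext x
      simp only [Set.mem_diff, Set.mem_union, Set.mem_insert_iff, Set.mem_singleton_iff,
        Set.mem_empty_iff_false, not_false_iff, and_true]
      constructor
      · tauto
      · intro h
        refine ⟨h, ?_⟩
        rintro rfl
        rcases h with h | h | h
        · exact hr h
        · exact hpr h.symm
        · exact hqr h.symm
    have e2 : (w ∪ {p}) \ ({q, r} : Set α) = (w ∪ {p}) \ ({q} : Set α) := by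
      ext x
      simp only [Set.mem_diff, Set.mem_union, Set.mem_insert_iff, Set.mem_singleton_iff]
      constructor
      · tauto
      · rintro ⟨h1, h4⟩
        refine ⟨h1, ?_⟩
        rintro (rfl | rfl)
        · exact h4 rfl
        · rcases h1 with h | h
          · exact hr h
          · exact hpr h.symm
    constructor
    · show M.toModel.U (M.toModel.S w _) ≥ M.toModel.U (M.toModel.S w _)
      have h := le_of_lt hstrict
      rw [← e1, ← e2, ← sA2, ← sB2] at h
      exact h
    · rw [sat, sat_succeq_eq M.toModel _ _ (hB2 ▸ nB2) (hA2 ▸ nA2)]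
      show ¬ (M.toModel.U (M.toModel.S w _) ≥ M.toModel.U (M.toModel.S w _))
      have h := hstrict
      rw [← e1, ← e2, ← sA2, ← sB2] at h
      exact not_le.2 h
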